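/- For every n ≥ 2, there exists a strongly connected primitive digraph on n nodes whose index of convergence is exactly (n-1)² + 1; concretely, the digraph with edges i → i+1 for 1 ≤ i ≤ n-1, n → 1, and n → 2 has no walk of length (n-1)² from node 1 to node 1, but has walks of every length ≥ (n-1)² + 1 between every pair of nodes. -/

import Mathlib

/-- `f` lists the successive nodes of a walk of length `k` in the digraph with
edge relation `E`. -/
def IsGWalk {n : ℕ} (E : Fin n → Fin n → Prop) {k : ℕ} (f : Fin (k + 1) → Fin n) : Prop :=
  ∀ t : Fin k, E (f t.castSucc) (f t.succ)

/-- A cycle: a nonempty closed walk in which only the start and end node coincide. -/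
def IsGCycle {n : ℕ} (E : Fin n → Fin n → Prop) {k : ℕ} (f : Fin (k + 1) → Fin n) : Prop :=
  0 < k ∧ IsGWalk E f ∧ f 0 = f (Fin.last k) ∧
    Function.Injective (fun t : Fin k => f t.castSucc)

/-- The Wielandt digraph on `n` nodes (numbered `0, …, n-1`, i.e., node `i` of
the paper corresponds to index `i - 1`): edges `i → i+1` for `0 ≤ i ≤ n-2`, and
edges `n-1 → 0` and `n-1 → 1`. -/
def wielandtE (n : ℕ) : Fin n → Fin n → Prop :=
  fun i j => (j : ℕ) = (i : ℕ) + 1 ∨ ((i : ℕ) = n - 1 ∧ ((j : ℕ) = 0 ∨ (j : ℕ) = 1))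

namespace WTight
variable {n : ℕ}

def HW (n k : ℕ) (i j : Fin n) : Prop :=
  ∃ f : Fin (k + 1) → Fin n, IsGWalk (wielandtE n) f ∧ f 0 = i ∧ f (Fin.last k) = j

lemma isGWalk_iff {k : ℕ} (E : Fin n → Fin n → Prop) (f : Fin (k+1) → Fin n) :
    IsGWalk E f ↔ ∀ s, (hs : s < k) → E (f ⟨s, by omega⟩) (f ⟨s+1, by omega⟩) := by
  constructor
  · intro h s hs; exact h ⟨s, hs⟩
  · intro h t; exact h t.1 t.2

lemma hw_nil (i : Fin n) : HW n 0 i i :=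
  ⟨fun _ => i, fun t => t.elim0, rfl, rfl⟩

lemma hw_single {i j : Fin n} (h : wielandtE n i j) : HW n 1 i j := by
  refine ⟨![i, j], ?_, rfl, rfl⟩
  intro t
  fin_cases t
  simpa using h

lemma hw_trans {k m : ℕ} {i j l : Fin n} (h1 : HW n k i j) (h2 : HW n m j l) :
    HW n (k + m) i l := by
  obtain ⟨f, hf, hf0, hfl⟩ := h1
  obtain ⟨g, hg, hg0, hgl⟩ := h2
  refine ⟨fun t => if ht : (t : ℕ) ≤ k then f ⟨t, by omega⟩ else g ⟨(t : ℕ) - k, by omega⟩,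
    ?_, ?_, ?_⟩
  · rw [isGWalk_iff]
    intro s hs
    by_cases h : s + 1 ≤ k
    · have hs1 : s ≤ k := by omega
      simp only [hs1, h, dif_pos]
      exact (isGWalk_iff _ f).1 hf s (by omega)
    · by_cases h' : s ≤ k
      · -- s = k
        have hsk : s = k := by omega
        have hm : 0 < m := by omega
        simp only [h', h, dif_pos, dif_neg, not_false_iff]
        have e1 : f ⟨s, by omega⟩ = g ⟨0, by omega⟩ := by
          have : (⟨s, by omega⟩ : Fin (k+1)) = Fin.last k := Fin.ext (by simp [hsk])
          rw [this, hfl, ← hg0]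
          congr 1
        rw [e1]
        have := (isGWalk_iff _ g).1 hg 0 (by omega)
        convert this using 3
        omega
      · -- s > k
        simp only [h', h, dif_neg, not_false_iff]
        have := (isGWalk_iff _ g).1 hg (s - k) (by omega)
        convert this using 3
        omega
  · simp only [Fin.val_zero, Nat.zero_le, dif_pos]
    rw [← hf0]
    congr 1
  · by_cases hm : m = 0
    · subst hm
      simp only [Fin.val_last, Nat.add_zero, le_refl, dif_pos]
      have : j = l := by rw [← hgl, ← hg0]; congr 1
      rw [← this, ← hfl]
      congr 1
    · have hlt : ¬ ((Fin.last (k+m) : ℕ) ≤ k) := by simp [Fin.val_last]; omega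
      simp only [hlt, dif_neg, not_false_iff]
      rw [← hgl]
      congr 1
      apply Fin.ext
      simp [Fin.val_last]

lemma hw_cast {k k' : ℕ} {i j : Fin n} (h : k = k') (hw : HW n k i j) : HW n k' i j := h ▸ hw

lemma hw_node {k : ℕ} {i j i' j' : Fin n} (hi : i = i') (hj : j = j') (hw : HW n k i j) :
    HW n k i' j' := hi ▸ hj ▸ hw

lemma hw_ascend (hn : 2 ≤ n) (d i : ℕ) (h : i + d ≤ n - 1) :
    HW n d ⟨i, by omega⟩ ⟨i + d, by omega⟩ := by
  induction d with
  | zero => exact hw_node rfl (by congr 1) (hw_nil _)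
  | succ d ih =>
    refine hw_cast (by omega) (hw_trans (ih (by omega)) (hw_single ?_))
    left
    simp
    omega

lemma hw_to_top (hn : 2 ≤ n) (i : ℕ) (hi : i < n) :
    HW n (n - 1 - i) ⟨i, by omega⟩ ⟨n - 1, by omega⟩ := by
  refine hw_node rfl (by congr 1; omega) (hw_ascend hn (n - 1 - i) i (by omega))

lemma hw_top0 (hn : 2 ≤ n) : HW n 1 ⟨n - 1, by omega⟩ ⟨0, Nat.lt_of_lt_of_le (Nat.succ_pos 1) hn⟩ :=
  hw_single (Or.inr ⟨rfl, Or.inl rfl⟩)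

lemma hw_top1 (hn : 2 ≤ n) : HW n 1 ⟨n - 1, by omega⟩ ⟨1, by omega⟩ :=
  hw_single (Or.inr ⟨rfl, Or.inr rfl⟩)

lemma hw_top_to (hn : 2 ≤ n) (j : ℕ) (hj : j < n) :
    HW n (j + 1) ⟨n - 1, by omega⟩ ⟨j, by omega⟩ := by
  have h2 : HW n j (⟨0, by omega⟩ : Fin n) ⟨j, by omega⟩ :=
    hw_node rfl (Fin.ext (by simp)) (hw_ascend hn j 0 (by omega))
  exact hw_cast (by omega) (hw_trans (hw_top0 hn) h2)

lemma hw_loop_long (hn : 2 ≤ n) : HW n n ⟨n - 1, by omega⟩ ⟨n - 1, by omega⟩ :=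
  hw_cast (by omega) (hw_top_to hn (n - 1) (by omega))

lemma hw_loop_short (hn : 2 ≤ n) : HW n (n - 1) ⟨n - 1, by omega⟩ ⟨n - 1, by omega⟩ :=
  hw_cast (by omega) (hw_trans (hw_top1 hn) (hw_to_top hn 1 (by omega)))

lemma hw_loops (hn : 2 ≤ n) (a b : ℕ) :
    HW n (a * n + b * (n - 1)) ⟨n - 1, by omega⟩ ⟨n - 1, by omega⟩ := by
  induction a with
  | zero =>
    induction b with
    | zero => simpa using hw_nil _
    | succ b ihb =>
      refine hw_cast (show b * (n-1) + (n-1) = 0 * n + (b+1) * (n-1) by ring)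
        (hw_trans (by simpa using ihb) (hw_loop_short hn))
  | succ a iha =>
    refine hw_cast (show (a * n + b * (n-1)) + n = (a+1) * n + b * (n-1) by ring)
      (hw_trans iha (hw_loop_long hn))

lemma hw_closed_pos (hn : 2 ≤ n) (i : ℕ) (h1 : 1 ≤ i) (hi : i < n) (a b : ℕ)
    (hab : 1 ≤ a + b) : HW n (a * n + b * (n - 1)) ⟨i, by omega⟩ ⟨i, by omega⟩ := by
  by_cases ha : 1 ≤ a
  · obtain ⟨a', rfl⟩ : ∃ a', a = a' + 1 := ⟨a - 1, by omega⟩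
    have w := hw_trans (hw_trans (hw_to_top hn i hi) (hw_loops hn a' b)) (hw_top_to hn i hi)
    refine hw_cast ?_ w
    have e : (a' + 1) * n = a' * n + n := by ring
    rw [e]
    generalize a' * n = A
    generalize b * (n - 1) = B
    omega
  · obtain ⟨b', rfl⟩ : ∃ b', b = b' + 1 := ⟨b - 1, by omega⟩
    have asc : HW n (i - 1) (⟨1, by omega⟩ : Fin n) ⟨i, by omega⟩ :=
      hw_node rfl (Fin.ext (by simp; omega)) (hw_ascend hn (i - 1) 1 (by omega))
    have w := hw_trans (hw_trans (hw_trans (hw_to_top hn i hi) (hw_loops hn a b'))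
      (hw_top1 hn)) asc
    refine hw_cast ?_ w
    have e : (b' + 1) * (n - 1) = b' * (n - 1) + (n - 1) := by ring
    rw [e]
    generalize a * n = A
    generalize b' * (n - 1) = B
    omega

lemma hw_closed_zero (hn : 2 ≤ n) (a b : ℕ) (ha : 1 ≤ a) :
    HW n (a * n + b * (n - 1)) ⟨0, Nat.lt_of_lt_of_le (Nat.succ_pos 1) hn⟩ ⟨0, Nat.lt_of_lt_of_le (Nat.succ_pos 1) hn⟩ := by
  obtain ⟨a', rfl⟩ : ∃ a', a = a' + 1 := ⟨a - 1, by omega⟩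
  have w := hw_trans (hw_trans (hw_to_top hn 0 (by omega)) (hw_loops hn a' b)) (hw_top0 hn)
  refine hw_cast ?_ w
  have e : (a' + 1) * n = a' * n + n := by ring
  rw [e]
  generalize a' * n = A
  generalize b * (n - 1) = B
  omega

lemma nt1 (hn : 2 ≤ n) (m : ℕ) (hm : (n - 1) * (n - 2) + 1 ≤ m) :
    ∃ a b : ℕ, m = a * n + b * (n - 1) := by
  obtain ⟨p, hp⟩ : ∃ p, n = p + 2 := ⟨n - 2, by omega⟩
  subst hp
  simp only [show p + 2 - 1 = p + 1 from rfl, show p + 2 - 2 = p from rfl] at hm ⊢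
  have hmod := Nat.div_add_mod m (p + 1)
  set q := m / (p + 1) with hq
  set r := m % (p + 1) with hr
  have hrlt : r < p + 1 := Nat.mod_lt _ (by omega)
  have hqr : r ≤ q := by
    by_contra hc
    push_neg at hc
    have h2 : (p + 1) * q + (p + 1) ≤ (p + 1) * r := by
      have := Nat.mul_le_mul_left (p + 1) (show q + 1 ≤ r by omega)
      rw [Nat.mul_add, Nat.mul_one] at this
      exact this
    have h3 : (p + 1) * r ≤ (p + 1) * p := Nat.mul_le_mul_left _ (by omega)
    generalize (p + 1) * q = A at h2 hmod
    generalize (p + 1) * r = B at h2 h3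
    generalize (p + 1) * p = C at h3 hm
    omega
  obtain ⟨c, hc⟩ : ∃ c, q = r + c := ⟨q - r, by omega⟩
  refine ⟨r, c, ?_⟩
  rw [← hmod, hc]
  ring

lemma nt2 (hn : 2 ≤ n) (m : ℕ) (hm : (n - 1) * (n - 1) + 1 ≤ m) :
    ∃ a b : ℕ, m = a * n + b * (n - 1) ∧ 1 ≤ a := by
  obtain ⟨p, hp⟩ : ∃ p, n = p + 2 := ⟨n - 2, by omega⟩
  subst hp
  simp only [show p + 2 - 1 = p + 1 from rfl] at hm ⊢
  have hm1 : 1 ≤ m := by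
    have : 1 ≤ (p + 1) * (p + 1) + 1 := by omega
    omega
  have hmod := Nat.div_add_mod (m - 1) (p + 1)
  set q := (m - 1) / (p + 1) with hq
  set r := (m - 1) % (p + 1) with hr
  have hrlt : r < p + 1 := Nat.mod_lt _ (by omega)
  have hqr : r + 1 ≤ q := by
    by_contra hc
    push_neg at hc
    have h2 : (p + 1) * q ≤ (p + 1) * r := Nat.mul_le_mul_left _ (by omega)
    have h3 : (p + 1) * r ≤ (p + 1) * p := Nat.mul_le_mul_left _ (by omega)
    have h4 : (p + 1) * p + (p + 1) = (p + 1) * (p + 1) := by ring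
    generalize (p + 1) * q = A at h2 hmod
    generalize (p + 1) * r = B at h2 h3
    generalize (p + 1) * p = C at h3 h4
    generalize (p + 1) * (p + 1) = D at h4 hm
    omega
  obtain ⟨c, hc⟩ : ∃ c, q = r + 1 + c := ⟨q - r - 1, by omega⟩
  refine ⟨r + 1, c, ?_, by omega⟩
  have : m = (p + 1) * q + r + 1 := by omega
  rw [this, hc]
  ring

lemma nt3 (hn : 2 ≤ n) (a b : ℕ) (ha : 1 ≤ a)
    (h : a * n + b * (n - 1) = (n - 1) * (n - 1)) : False := by
  obtain ⟨p, hp⟩ : ∃ p, n = p + 2 := ⟨n - 2, by omega⟩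
  subst hp
  simp only [show p + 2 - 1 = p + 1 from rfl] at h
  have h2 : (p + 1) * (a + b) + a = (p + 1) * (p + 1) := by rw [← h]; ring
  have hd : (p + 1) ∣ a :=
    (Nat.dvd_add_right (dvd_mul_right (p + 1) (a + b))).mp
      (h2 ▸ dvd_mul_right (p + 1) (p + 1))
  obtain ⟨c, hc⟩ := hd
  subst hc
  have hc1 : 1 ≤ c := by
    rcases Nat.eq_zero_or_pos c with h0 | h0
    · subst h0; simp at ha
    · exact h0
  have h3 : (p + 1) * (((p + 1) * c + b) + c) = (p + 1) * (p + 1) := by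
    rw [Nat.mul_add]; exact h2
  have h4 : ((p + 1) * c + b) + c = p + 1 :=
    Nat.eq_of_mul_eq_mul_left (by omega) h3
  have hX : p + 1 ≤ (p + 1) * c := Nat.le_mul_of_pos_right _ hc1
  generalize (p + 1) * c = X at h4 hX
  omega

lemma invariant (hn : 2 ≤ n) :
    ∀ (k : ℕ) (f : Fin (k + 1) → Fin n), IsGWalk (wielandtE n) f →
      ∃ a b : ℕ, ((f (Fin.last k) : ℕ) + n * a + (n - 1) * b = (f 0 : ℕ) + k) ∧
        (0 < k → (f (Fin.last k) : ℕ) = 0 → 1 ≤ a) := by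
  intro k
  induction k with
  | zero =>
    intro f _
    exact ⟨0, 0, by simp [Fin.last], by omega⟩
  | succ k ih =>
    intro f hf
    show ∃ a b : ℕ, ((f (Fin.last (k + 1)) : ℕ) + n * a + (n - 1) * b = (f 0 : ℕ) + (k + 1)) ∧
      (0 < k + 1 → (f (Fin.last (k + 1)) : ℕ) = 0 → 1 ≤ a)
    have hres : IsGWalk (wielandtE n) (f ∘ Fin.castSucc) := by
      intro t
      have := hf t.castSucc
      rw [Fin.succ_castSucc] at this
      exact this
    obtain ⟨a, b, h1, -⟩ := ih (f ∘ Fin.castSucc) hres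
    simp only [Function.comp_apply, Fin.castSucc_zero] at h1
    have hedge' : wielandtE n (f ((Fin.last k).castSucc)) (f (Fin.last (k + 1))) := by
      have hedge := hf (Fin.last k)
      rw [Fin.succ_last] at hedge
      exact hedge
    have hun : (f ((Fin.last k).castSucc) : ℕ) < n := Fin.is_lt _
    rcases hedge' with hcase | ⟨hcase1, hcase2⟩
    · refine ⟨a, b, ?_, ?_⟩
      · generalize n * a = A at h1 ⊢
        generalize (n - 1) * b = B at h1 ⊢
        omega
      · intro _ hv0; omega
    · rcases hcase2 with hv0 | hv1
      · refine ⟨a + 1, b, ?_, fun _ _ => by omega⟩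
        have e : n * (a + 1) = n * a + n := by ring
        rw [e]
        generalize n * a = A at h1 ⊢
        generalize (n - 1) * b = B at h1 ⊢
        omega
      · refine ⟨a, b + 1, ?_, ?_⟩
        · have e : (n - 1) * (b + 1) = (n - 1) * b + (n - 1) := by ring
          rw [e]
          generalize n * a = A at h1 ⊢
          generalize (n - 1) * b = B at h1 ⊢
          omega
        · intro _ hv0; omega

theorem wielandt_tight' (n : ℕ) (hn : 2 ≤ n) :
    (¬ ∃ f : Fin ((n - 1) ^ 2 + 1) → Fin n, IsGWalk (wielandtE n) f ∧
        f 0 = ⟨0, Nat.lt_of_lt_of_le (Nat.succ_pos 1) hn⟩ ∧ f (Fin.last ((n - 1) ^ 2)) = ⟨0, Nat.lt_of_lt_of_le (Nat.succ_pos 1) hn⟩) ∧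
    (∀ i j : Fin n, ∀ k, (n - 1) ^ 2 + 1 ≤ k →
      ∃ f : Fin (k + 1) → Fin n, IsGWalk (wielandtE n) f ∧
        f 0 = i ∧ f (Fin.last k) = j) := by
  have e2 : (n - 1) * (n - 1) = (n - 1) * (n - 2) + (n - 1) := by
    obtain ⟨p, hp⟩ : ∃ p, n = p + 2 := ⟨n - 2, by omega⟩
    subst hp
    simp only [show p + 2 - 1 = p + 1 from rfl, show p + 2 - 2 = p from rfl]
    ring
  constructor
  · rintro ⟨f, hf, hf0, hfl⟩
    obtain ⟨a, b, h1, h2⟩ := invariant hn ((n - 1) ^ 2) f hf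
    rw [hf0] at h1
    rw [hfl] at h1 h2
    have h1' : (0 : ℕ) + n * a + (n - 1) * b = 0 + (n - 1) ^ 2 := h1
    have hk : 0 < (n - 1) ^ 2 := by
      have : 1 ≤ n - 1 := by omega
      positivity
    have ha : 1 ≤ a := h2 hk rfl
    apply nt3 hn a b ha
    have e : (n - 1) ^ 2 = (n - 1) * (n - 1) := by ring
    rw [e] at h1'
    calc a * n + b * (n - 1) = 0 + n * a + (n - 1) * b := by ring
      _ = (n - 1) * (n - 1) := by rw [h1']; ring
  · intro i j k hk
    rw [show (n - 1) ^ 2 = (n - 1) * (n - 1) from by ring] at hk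
    have hij : (i : ℕ) < n := i.2
    have hjj : (j : ℕ) < n := j.2
    have main : HW n k i j := by
      by_cases hi0 : (i : ℕ) = 0
      · by_cases hj0 : (j : ℕ) = 0
        · obtain ⟨a, b, hab, ha⟩ := nt2 hn k hk
          have w := hw_closed_zero hn a b ha
          rw [← hab] at w
          exact hw_node (Fin.ext hi0.symm) (Fin.ext hj0.symm) w
        · -- i = 0, j ≥ 1 : step 0 → 1, loop at 1, ascend 1 → j
          have hjk : (j : ℕ) + 1 ≤ k := by
            generalize (n - 1) * (n - 1) = X at hk e2
            generalize (n - 1) * (n - 2) = Y at e2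
            omega
          have hc : (n - 1) * (n - 2) + 1 ≤ k - (j : ℕ) := by
            generalize (n - 1) * (n - 1) = X at hk e2
            generalize (n - 1) * (n - 2) = Y at e2 ⊢
            omega
          obtain ⟨a, b, hab⟩ := nt1 hn (k - (j : ℕ)) hc
          have hcpos : 1 ≤ k - (j : ℕ) := by
            generalize (n - 1) * (n - 2) = Y at hc
            omega
          have hab1 : 1 ≤ a + b := by
            by_contra hcon
            have ha0 : a = 0 := by omega
            have hb0 : b = 0 := by omega
            rw [ha0, hb0] at hab
            simp at hab
            omega
          have w1 : HW n 1 (⟨0, by omega⟩ : Fin n) ⟨1, by omega⟩ :=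
            hw_single (Or.inl (by simp))
          have w2 : HW n (k - (j : ℕ)) (⟨1, by omega⟩ : Fin n) ⟨1, by omega⟩ :=
            hab ▸ hw_closed_pos hn 1 le_rfl (by omega) a b hab1
          have w3 : HW n ((j : ℕ) - 1) (⟨1, by omega⟩ : Fin n) ⟨(j : ℕ), hjj⟩ :=
            hw_node rfl (Fin.ext (by simp; omega))
              (hw_ascend hn ((j : ℕ) - 1) 1 (by omega))
          have w := hw_trans (hw_trans w1 w2) w3
          have wk : HW n k (⟨0, by omega⟩ : Fin n) ⟨(j : ℕ), hjj⟩ :=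
            hw_cast (by omega) w
          exact hw_node (Fin.ext hi0.symm) (Fin.ext rfl) wk
      · -- i ≥ 1
        obtain ⟨d, wpath, hd⟩ : ∃ d, HW n d (⟨(i : ℕ), hij⟩ : Fin n) ⟨(j : ℕ), hjj⟩ ∧
            d ≤ n - 1 := by
          by_cases hij' : (i : ℕ) ≤ (j : ℕ)
          · refine ⟨(j : ℕ) - (i : ℕ), ?_, by omega⟩
            exact hw_node rfl (Fin.ext (by simp; omega))
              (hw_ascend hn ((j : ℕ) - (i : ℕ)) (i : ℕ) (by omega))
          · refine ⟨(n - 1 - (i : ℕ)) + 1 + (j : ℕ), ?_, by omega⟩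
            have wasc : HW n (j : ℕ) (⟨0, by omega⟩ : Fin n) ⟨(j : ℕ), hjj⟩ :=
              hw_node rfl (Fin.ext (by simp)) (hw_ascend hn (j : ℕ) 0 (by omega))
            exact hw_trans (hw_trans (hw_to_top hn (i : ℕ) hij) (hw_top0 hn)) wasc
        have hc : (n - 1) * (n - 2) + 1 ≤ k - d := by
          generalize (n - 1) * (n - 1) = X at hk e2
          generalize (n - 1) * (n - 2) = Y at e2 ⊢
          omega
        obtain ⟨a, b, hab⟩ := nt1 hn (k - d) hc
        have hdk : d ≤ k := by
          generalize (n - 1) * (n - 2) = Y at hc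
          omega
        have hab1 : 1 ≤ a + b := by
          by_contra hcon
          have ha0 : a = 0 := by omega
          have hb0 : b = 0 := by omega
          rw [ha0, hb0] at hab
          simp at hab
          have hcpos : 1 ≤ k - d := by
            generalize (n - 1) * (n - 2) = Y at hc
            omega
          omega
        have wc : HW n (k - d) (⟨(i : ℕ), hij⟩ : Fin n) ⟨(i : ℕ), hij⟩ :=
          hab ▸ hw_closed_pos hn (i : ℕ) (by omega) hij a b hab1
        have wk : HW n k (⟨(i : ℕ), hij⟩ : Fin n) ⟨(j : ℕ), hjj⟩ :=
          hw_cast (by omega) (hw_trans wc wpath)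
        exact hw_node (Fin.ext rfl) (Fin.ext rfl) wk
    exact main

end WTight

theorem wielandt_tight (n : ℕ) (hn : 2 ≤ n) :
    (¬ ∃ f : Fin ((n - 1) ^ 2 + 1) → Fin n, IsGWalk (wielandtE n) f ∧
        f 0 = ⟨0, by omega⟩ ∧ f (Fin.last ((n - 1) ^ 2)) = ⟨0, by omega⟩) ∧
    (∀ i j : Fin n, ∀ k, (n - 1) ^ 2 + 1 ≤ k →
      ∃ f : Fin (k + 1) → Fin n, IsGWalk (wielandtE n) f ∧
        f 0 = i ∧ f (Fin.last k) = j) := by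
  exact WTight.wielandt_tight' n hn
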